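/- Let ξ ∈ ℝ with |ξ| < k_δ, where k_δ = ∫_0^δ w_s^{−2} ds. Then the deterministic forward–backward system μ'(t) = −w_t^{−2}·h(t), h'(t) = 0 on [0,T] with boundary conditions μ(0) = ξ and h(T) = g(μ(T)) has exactly three solutions, namely (μ(t), h(t)) = (ξ − A·k_t, A) for A ∈ {−1, ξ/k_δ, 1}. -/

import Mathlib

/-- For `|ξ| < k_δ`, the deterministic forward–backward system `μ' = −w⁻²·h`,
`h' = 0` on `[0,T]` with `μ(0) = ξ`, `h(T) = g(μ(T))` has exactly three solutions,
namely `(μ(t), h(t)) = (ξ − A·k_t, A)` for `A ∈ {−1, ξ/k_δ, 1}`. -/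
theorem fbsde_no_common_noise_three_solutions_general_init
    (T κ δ ξ : ℝ) (hT : 0 < T) (hδ : δ ∈ Set.Ioo 0 T)
    (η w r k g : ℝ → ℝ)
    (hη : ∀ t ∈ Set.Icc (0:ℝ) T,
      HasDerivWithinAt η (η t ^ 2 - 2 * κ * η t - 1) (Set.Icc (0:ℝ) T) t)
    (hηT : η T = 1)
    (hw : ∀ t, w t = Real.exp (∫ s in t..T, (-κ + η s)))
    (hr : ∀ t, r t = ∫ s in t..T, ((w s) ^ 2)⁻¹)
    (hk : ∀ t, k t = ∫ s in (0:ℝ)..t, ((w s) ^ 2)⁻¹)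
    (hrδ : 0 < r δ)
    (hg : ∀ x, g x = if |x| ≤ r δ then -x / r δ else -Real.sign x)
    (hξ : |ξ| < k δ) :
    (∀ A ∈ ({-1, ξ / k δ, 1} : Set ℝ),
      (∀ t ∈ Set.Icc (0:ℝ) T,
        HasDerivWithinAt (fun s => ξ - A * k s) (-((w t) ^ 2)⁻¹ * A) (Set.Icc (0:ℝ) T) t) ∧
      ξ - A * k 0 = ξ ∧ A = g (ξ - A * k T)) ∧
    (∀ μ h : ℝ → ℝ,
      (∀ t ∈ Set.Icc (0:ℝ) T,
        HasDerivWithinAt μ (-((w t) ^ 2)⁻¹ * h t) (Set.Icc (0:ℝ) T) t) →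
      (∀ t ∈ Set.Icc (0:ℝ) T, HasDerivWithinAt h 0 (Set.Icc (0:ℝ) T) t) →
      μ 0 = ξ → h T = g (μ T) →
      ∃ A ∈ ({-1, ξ / k δ, 1} : Set ℝ),
        ∀ t ∈ Set.Icc (0:ℝ) T, μ t = ξ - A * k t ∧ h t = A) := by
  obtain ⟨hδ0, hδT⟩ := hδ
  have hηcont : ContinuousOn η (Set.Icc 0 T) := fun t ht => (hη t ht).continuousWithinAt
  set ηc : ℝ → ℝ := fun t => -κ + η (Set.projIcc 0 T hT.le t) with hηcdef
  have hηc_cont : Continuous ηc :=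
    continuous_const.add (hηcont.comp_continuous
      (continuous_subtype_val.comp continuous_projIcc) fun x => Subtype.coe_prop _)
  have hηc_eq : ∀ t ∈ Set.Icc (0:ℝ) T, ηc t = -κ + η t := by
    intro t ht; simp [hηcdef, Set.projIcc_of_mem hT.le ht]
  set I : ℝ → ℝ := fun u => ∫ s in (0:ℝ)..u, ηc s with hIdef
  have hI_cont : Continuous I := intervalIntegral.continuous_primitive
    (fun a b => hηc_cont.intervalIntegrable a b) 0
  set wc : ℝ → ℝ := fun t => Real.exp (I T - I t) with hwcdef
  have hwc_cont : Continuous wc := Real.continuous_exp.comp (continuous_const.sub hI_cont)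
  have hwc_pos : ∀ t, 0 < wc t := fun t => Real.exp_pos _
  have hw_eq : ∀ t ∈ Set.Icc (0:ℝ) T, w t = wc t := by
    intro t ht
    have h1 : (∫ s in t..T, (-κ + η s)) = ∫ s in t..T, ηc s := by
      refine (intervalIntegral.integral_congr ?_).symm
      intro s hs
      rw [Set.uIcc_of_le ht.2] at hs
      exact hηc_eq s ⟨le_trans ht.1 hs.1, hs.2⟩
    have h2 : I T - I t = ∫ s in t..T, ηc s :=
      intervalIntegral.integral_interval_sub_left (hηc_cont.intervalIntegrable 0 T)
        (hηc_cont.intervalIntegrable 0 t)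
    rw [hw t, h1, ← h2]
  set F : ℝ → ℝ := fun s => ((wc s) ^ 2)⁻¹ with hFdef
  have hF_cont : Continuous F :=
    (hwc_cont.pow 2).inv₀ fun t => pow_ne_zero 2 (hwc_pos t).ne'
  have hF_eq : ∀ s ∈ Set.Icc (0:ℝ) T, ((w s) ^ 2)⁻¹ = F s := by
    intro s hs; rw [hFdef]; rw [hw_eq s hs]
  set K : ℝ → ℝ := fun u => ∫ s in (0:ℝ)..u, F s with hKdef
  have hKd : ∀ t : ℝ, HasDerivAt K (F t) t := fun t =>
    intervalIntegral.integral_hasDerivAt_right (hF_cont.intervalIntegrable 0 t)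
      (hF_cont.stronglyMeasurableAtFilter _ _) hF_cont.continuousAt
  have hk_eq : ∀ t ∈ Set.Icc (0:ℝ) T, k t = K t := by
    intro t ht
    rw [hk t]
    refine intervalIntegral.integral_congr ?_
    intro s hs
    rw [Set.uIcc_of_le ht.1] at hs
    exact hF_eq s ⟨hs.1, le_trans hs.2 ht.2⟩
  have hkd : ∀ t ∈ Set.Icc (0:ℝ) T,
      HasDerivWithinAt k (((w t) ^ 2)⁻¹) (Set.Icc (0:ℝ) T) t := by
    intro t ht
    rw [hF_eq t ht]
    exact ((hKd t).hasDerivWithinAt).congr (fun y hy => hk_eq y hy) (hk_eq t ht)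
  have hδmem : δ ∈ Set.Icc (0:ℝ) T := ⟨hδ0.le, hδT.le⟩
  have hTmem : T ∈ Set.Icc (0:ℝ) T := ⟨hT.le, le_refl T⟩
  have hk0 : k 0 = 0 := by rw [hk 0, intervalIntegral.integral_same]
  have hrδ_eq : r δ = K T - K δ := by
    rw [hr δ]
    have h1 : (∫ s in δ..T, ((w s) ^ 2)⁻¹) = ∫ s in δ..T, F s := by
      refine intervalIntegral.integral_congr ?_
      intro s hs
      rw [Set.uIcc_of_le hδT.le] at hs
      exact hF_eq s ⟨le_trans hδ0.le hs.1, hs.2⟩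
    rw [h1]
    exact (intervalIntegral.integral_interval_sub_left (hF_cont.intervalIntegrable 0 T)
      (hF_cont.intervalIntegrable 0 δ)).symm
  have hkT : k T = k δ + r δ := by
    rw [hk_eq T hTmem, hk_eq δ hδmem, hrδ_eq]; ring
  have hkδpos : 0 < k δ := lt_of_le_of_lt (abs_nonneg ξ) hξ
  have hkδne : k δ ≠ 0 := ne_of_gt hkδpos
  have hrδne : r δ ≠ 0 := ne_of_gt hrδ
  have hξ1 : -(k δ) < ξ := neg_lt_of_abs_lt hξ
  have hξ2 : ξ < k δ := lt_of_abs_lt hξ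
  constructor
  · intro A hA
    refine ⟨?_, ?_, ?_⟩
    · intro t ht
      have hd := ((hkd t ht).const_mul A).const_sub ξ
      have e : -((w t) ^ 2)⁻¹ * A = -(A * ((w t) ^ 2)⁻¹) := by ring
      rw [e]; exact hd
    · rw [hk0]; ring
    · rw [hkT]
      simp only [Set.mem_insert_iff, Set.mem_singleton_iff] at hA
      rcases hA with hA | hA | hA
      · subst hA
        rw [hg]
        have hxpos : 0 < ξ - (-1) * (k δ + r δ) := by linarith
        rw [if_neg (by rw [abs_of_pos hxpos]; push_neg; linarith),
          Real.sign_of_pos hxpos]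
      · subst hA
        rw [hg]
        have hxe : ξ - ξ / k δ * (k δ + r δ) = -(ξ * (r δ / k δ)) := by
          field_simp; ring
        rw [hxe]
        have habs : |(-(ξ * (r δ / k δ)))| ≤ r δ := by
          rw [abs_neg, abs_mul, abs_of_pos (div_pos hrδ hkδpos)]
          calc |ξ| * (r δ / k δ) ≤ k δ * (r δ / k δ) :=
                mul_le_mul_of_nonneg_right hξ.le (by positivity)
            _ = r δ := by field_simp
        rw [if_pos habs]
        field_simp
      · subst hA
        rw [hg]
        have hxneg : ξ - 1 * (k δ + r δ) < 0 := by linarith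
        rw [if_neg (by rw [abs_of_neg hxneg]; push_neg; linarith),
          Real.sign_of_neg hxneg]
        norm_num
  · intro μ h hμd hhd hμ0 hhT
    have hconst : ∀ G : ℝ → ℝ,
        (∀ t ∈ Set.Icc (0:ℝ) T, HasDerivWithinAt G 0 (Set.Icc (0:ℝ) T) t) →
        ∀ t ∈ Set.Icc (0:ℝ) T, G t = G 0 := by
      intro G hG
      exact constant_of_has_deriv_right_zero
        (fun t ht => (hG t ht).continuousWithinAt)
        (fun t ht => (hG t (Set.Ico_subset_Icc_self ht)).mono_of_mem_nhdsWithin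
          (Icc_mem_nhdsGE_of_mem ht))
    have hhc : ∀ t ∈ Set.Icc (0:ℝ) T, h t = h 0 := hconst h hhd
    set A := h 0 with hAdef
    have hμeq : ∀ t ∈ Set.Icc (0:ℝ) T, μ t = ξ - A * k t := by
      have hFd : ∀ t ∈ Set.Icc (0:ℝ) T,
          HasDerivWithinAt (fun s => μ s + A * k s) 0 (Set.Icc (0:ℝ) T) t := by
        intro t ht
        have h1 := (hμd t ht).add ((hkd t ht).const_mul A)
        have h2 : -((w t) ^ 2)⁻¹ * h t + A * ((w t) ^ 2)⁻¹ = 0 := by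
          rw [hhc t ht]; ring
        exact h2 ▸ h1
      intro t ht
      have hc := hconst (fun s => μ s + A * k s) hFd t ht
      rw [hμ0, hk0] at hc
      linarith
    have hAval : A = g (ξ - A * (k δ + r δ)) := by
      rw [← hkT, ← hμeq T hTmem, ← hhT, hhc T hTmem]
    refine ⟨A, ?_, fun t ht => ⟨hμeq t ht, hhc t ht⟩⟩
    simp only [Set.mem_insert_iff, Set.mem_singleton_iff]
    rw [hg] at hAval
    by_cases hcase : |ξ - A * (k δ + r δ)| ≤ r δ
    · rw [if_pos hcase] at hAval
      rw [eq_div_iff hrδne] at hAval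
      right; left
      rw [eq_div_iff hkδne]
      nlinarith [hAval]
    · rw [if_neg hcase] at hAval
      push_neg at hcase
      rcases lt_trichotomy (ξ - A * (k δ + r δ)) 0 with hx | hx | hx
      · rw [Real.sign_of_neg hx] at hAval
        right; right
        simp [hAval]
      · exfalso; rw [hx, abs_zero] at hcase; linarith
      · rw [Real.sign_of_pos hx] at hAval
        left; exact hAval
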